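/- arXiv:1608.05807 — 2 statements merged into one kernel-verified Lean document; each statement's English description precedes it below -/
import Mathlib

section
/- There exist constants $\gamma>0$ and $\rho>0$ such that for every $\lambda\in\mathbb{C}$ with $|\lambda|^2+1/|\lambda|^2=4$ and every $\eta\in\mathbb{C}$ with $|\eta-\eta_0(\lambda)|\leq\rho$, where $\eta_0(\lambda)=-\tfrac{1}{\sqrt{2}}(\lambda+1/\overline{\lambda})$, one has $\big|\,|\eta|^2+\tfrac{1}{\sqrt{2}}(\lambda\overline{\eta}+\eta/\lambda)\,\big|\geq \gamma\,|\eta-\eta_0(\lambda)|$. -/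
/-- Pure field identity: expanding the symbol at `η = η₀ + z`. -/
lemma key_identity (s l k z w : ℂ) (hs : s ≠ 0) (hl : l ≠ 0) (hk : k ≠ 0) :
    (-(1/s)*(l + 1/k) + z) * (-(1/s)*(k + 1/l) + w)
      + (1/s) * (l * (-(1/s)*(k + 1/l) + w) + (-(1/s)*(l + 1/k) + z) / l)
    = z * w - (1/s) * (w / k + k * z) := by
  field_simp
  ring_nf

/-- There are `γ, ρ > 0` such that for every `λ` with
`|λ|² + 1/|λ|² = 4` and every `η` with `|η - η₀(λ)| ≤ ρ`, where
`η₀(λ) = -(1/√2)(λ + 1/λ̄)`, one has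
`| |η|² + (1/√2)(λ η̄ + η/λ) | ≥ γ |η - η₀(λ)|`. -/
theorem symbol_lower_bound_near_eta0 :
    ∃ γ : ℝ, 0 < γ ∧ ∃ ρ : ℝ, 0 < ρ ∧ ∀ lam : ℂ,
      ‖lam‖ ^ 2 + 1 / ‖lam‖ ^ 2 = 4 →
      ∀ η : ℂ,
        ‖η - (-(1 / (Real.sqrt 2) : ℂ) * (lam + 1 / starRingEnd ℂ lam))‖ ≤ ρ →
        ‖(‖η‖ : ℂ) ^ 2
            + (1 / (Real.sqrt 2) : ℂ) * (lam * (starRingEnd ℂ η) + η / lam)‖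
          ≥ γ * ‖η - (-(1 / (Real.sqrt 2) : ℂ) * (lam + 1 / starRingEnd ℂ lam))‖ := by
  refine ⟨1/2, by norm_num, 1/2, by norm_num, ?_⟩
  intro lam hlam η hη
  have hlam0 : lam ≠ 0 := by
    rintro rfl
    norm_num at hlam
  set s : ℂ := ((Real.sqrt 2 : ℝ) : ℂ) with hs_def
  have hsabs : ‖s‖ = Real.sqrt 2 := by
    rw [hs_def, Complex.norm_real, Real.norm_of_nonneg (Real.sqrt_nonneg 2)]
  have hs0 : s ≠ 0 := by
    rw [hs_def]
    norm_cast
    positivity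
  set k : ℂ := starRingEnd ℂ lam with hk_def
  have hk0 : k ≠ 0 := by
    rw [hk_def]
    simpa using hlam0
  set η₀ : ℂ := -(1/s) * (lam + 1/k) with hη₀_def
  set z : ℂ := η - η₀ with hz_def
  set w : ℂ := starRingEnd ℂ z with hw_def
  have hηz : η = η₀ + z := by rw [hz_def]; ring
  have hconjη : starRingEnd ℂ η = -(1/s)*(k + 1/lam) + w := by
    rw [hηz, hη₀_def, hw_def]
    simp only [map_add, map_mul, map_neg, map_div₀, map_one]
    rw [hs_def, Complex.conj_ofReal, hk_def, Complex.conj_conj]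
  -- the key algebraic identity
  have hP : (‖η‖ : ℂ) ^ 2 + (1/s) * (lam * (starRingEnd ℂ η) + η / lam)
      = z * w - (1/s) * (w / k + k * z) := by
    have habs : ((‖η‖ : ℝ) : ℂ) ^ 2 = η * starRingEnd ℂ η := by
      rw [Complex.mul_conj]
      norm_cast
      exact Complex.sq_norm η
    rw [habs, hconjη]
    rw [show η = -(1/s)*(lam + 1/k) + z by rw [hηz, hη₀_def]]
    exact key_identity s lam k z w hs0 hlam0 hk0
  -- lower bound on the linear part
  set r : ℝ := ‖lam‖ with hr_def
  have hr0 : 0 < r := by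
    rw [hr_def]
    exact norm_pos_iff.mpr hlam0
  have hkabs : ‖k‖ = r := by rw [hk_def]; simp [hr_def]
  have hwabs : ‖w‖ = ‖z‖ := by rw [hw_def]; simp
  have hlin : Real.sqrt 2 * ‖z‖ ≤ ‖w / k + k * z‖ := by
    have hnsq : Complex.normSq (w / k + k * z)
        = Complex.normSq (w / k) + Complex.normSq (k * z)
          + 2 * ((w / k) * starRingEnd ℂ (k * z)).re := Complex.normSq_add _ _
    have h1 : Complex.normSq (w / k) = (‖z‖)^2 / r^2 := by
      rw [← Complex.sq_norm, norm_div, hkabs, hwabs, div_pow]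
    have h2 : Complex.normSq (k * z) = r^2 * (‖z‖)^2 := by
      rw [← Complex.sq_norm, norm_mul, hkabs, mul_pow]
    have h3 : -((‖z‖)^2) ≤ ((w / k) * starRingEnd ℂ (k * z)).re := by
      have habs' : ‖(w / k) * starRingEnd ℂ (k * z)‖ = (‖z‖)^2 := by
        rw [norm_mul, Complex.norm_conj, norm_div, norm_mul, hkabs, hwabs]
        field_simp
      have h := Complex.abs_re_le_norm ((w / k) * starRingEnd ℂ (k * z))
      rw [habs'] at h
      linarith [neg_abs_le (((w / k) * starRingEnd ℂ (k * z)).re), abs_le.mp h]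
    have hge : 2 * (‖z‖)^2 ≤ Complex.normSq (w / k + k * z) := by
      rw [hnsq, h1, h2]
      have hsum : 4 * (‖z‖)^2 ≤ (‖z‖)^2 / r^2 + r^2 * (‖z‖)^2 := by
        have : (‖z‖)^2 / r^2 + r^2 * (‖z‖)^2
            = (r^2 + 1/r^2) * (‖z‖)^2 := by
          field_simp
          ring
        rw [this, hlam]
      linarith [h3]
    have h2' : (Real.sqrt 2 * ‖z‖)^2 ≤ (‖w / k + k * z‖)^2 := by
      rw [Complex.sq_norm, mul_pow, Real.sq_sqrt (by norm_num : (2:ℝ) ≥ 0)]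
      exact hge
    nlinarith [h2', norm_nonneg (w / k + k * z),
      mul_nonneg (Real.sqrt_nonneg 2) (norm_nonneg z)]
  -- conclude
  have hz_half : ‖z‖ ≤ 1/2 := hη
  calc (1:ℝ)/2 * ‖z‖
      ≤ ‖z‖ - (‖z‖)^2 := by nlinarith [norm_nonneg z]
    _ ≤ ‖(1/s) * (w / k + k * z)‖ - ‖z * w‖ := by
        have e1 : ‖(1/s) * (w / k + k * z)‖
            = (1 / Real.sqrt 2) * ‖w / k + k * z‖ := by
          rw [norm_mul, norm_div, norm_one, hsabs]
        have e2 : ‖z * w‖ = (‖z‖)^2 := by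
          rw [norm_mul, hwabs]; ring
        rw [e1, e2]
        have h2pos : (0:ℝ) < Real.sqrt 2 := Real.sqrt_pos.mpr (by norm_num)
        have : ‖z‖ ≤ (1 / Real.sqrt 2) * ‖w / k + k * z‖ := by
          rw [div_mul_eq_mul_div, le_div_iff₀ h2pos, one_mul, mul_comm]
          exact hlin
        linarith
    _ ≤ ‖z * w - (1/s) * (w / k + k * z)‖ := by
        have h := norm_sub_norm_le ((1/s) * (w / k + k * z)) (z * w)
        rw [norm_sub_rev] at h
        simpa using h
    _ = ‖(‖η‖ : ℂ) ^ 2 + (1/s) * (lam * (starRingEnd ℂ η) + η / lam)‖ := by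
        rw [hP]
end

section
/- Let $s>2$, let $A'>A>1$, let $D=\{\lambda\in\mathbb{C}:A^{-1}<|\lambda|<A\}$ and $D'=\{\lambda\in\mathbb{C}:(A')^{-1}<|\lambda|<A'\}$, and let $g\in L^2(\mathbb{C})$ vanish almost everywhere on $D'$. Then the map sending $f\in L^s(\mathbb{C})$ to the function $\overline{D}\ni\lambda\mapsto\int_{\mathbb{C}}\frac{g(\varsigma)f(\varsigma)}{\varsigma-\lambda}\,dA(\varsigma)$ is a compact continuous linear operator from $L^s(\mathbb{C})$ to the Banach space $C(\overline{D})$ of continuous functions on $\overline{D}$ with the supremum norm. -/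
open MeasureTheory
open scoped ENNReal

lemma aux_div_le1 {a b c u d : ℝ} (hc : 0 < c) (hu : 1 ≤ u) (hd : c * u ≤ d)
    (ha : 0 ≤ a) (hb : 0 ≤ b) : a * b / d ≤ c⁻¹ * (a * u⁻¹ * b) := by
  have hu0 : (0:ℝ) < u := lt_of_lt_of_le one_pos hu
  have hd0 : (0:ℝ) < d := lt_of_lt_of_le (by positivity) hd
  rw [div_le_iff₀ hd0]
  have h2 : c⁻¹ * (a * u⁻¹ * b) * d = a * b * d / (c * u) := by field_simp
  rw [h2, le_div_iff₀ (by positivity)]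
  exact mul_le_mul_of_nonneg_left hd (by positivity)

lemma aux_div_le2 {a b v c u d₁ d₂ : ℝ} (hc : 0 < c) (hu : 1 ≤ u) (h1 : c * u ≤ d₁)
    (h2 : c * u ≤ d₂) (ha : 0 ≤ a) (hb : 0 ≤ b) (hv : 0 ≤ v) :
    a * b * v / (d₁ * d₂) ≤ c⁻¹ * c⁻¹ * v * (a * u⁻¹ * b) := by
  have hu0 : (0:ℝ) < u := lt_of_lt_of_le one_pos hu
  have hd1 : (0:ℝ) < d₁ := lt_of_lt_of_le (by positivity) h1
  have hd2 : (0:ℝ) < d₂ := lt_of_lt_of_le (by positivity) h2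
  rw [div_le_iff₀ (by positivity)]
  have h3 : c⁻¹ * c⁻¹ * v * (a * u⁻¹ * b) * (d₁ * d₂) = a * b * v * (d₁ * d₂) / (c * c * u) := by
    field_simp
  rw [h3, le_div_iff₀ (by positivity)]
  have h4 : c * u * (c * u) ≤ d₁ * d₂ := mul_le_mul h1 h2 (by positivity) hd1.le
  have h5 : c * c * u ≤ d₁ * d₂ := by
    nlinarith [mul_le_mul_of_nonneg_left hu (by positivity : (0:ℝ) ≤ c*c*u)]
  exact mul_le_mul_of_nonneg_left h5 (by positivity)

set_option maxHeartbeats 2000000 in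
set_option synthInstance.maxHeartbeats 400000 in
/-- For `s > 2`, `1 < A < A'`, annuli
`D = {A⁻¹ < |λ| < A}`, `D' = {A'⁻¹ < |λ| < A'}`, and `g ∈ L²(ℂ)` vanishing a.e.
on `D'`, the map `f ↦ (λ ↦ ∫ g(ς)f(ς)/(ς-λ) dA(ς))` is a compact continuous
linear operator from `Lˢ(ℂ)` to `C(D̄)` (continuous functions on `D̄` with the
sup norm). -/
theorem cauchy_transform_compact_to_C (s A A' : ℝ) (hs : 2 < s) (hA : 1 < A)
    (hAA' : A < A') (g : ℂ → ℂ) (hg : MemLp g 2 (volume : Measure ℂ))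
    (hg0 : ∀ᵐ ς : ℂ, ((A')⁻¹ < ‖ς‖ ∧ ‖ς‖ < A') → g ς = 0) :
    haveI : Fact (1 ≤ ENNReal.ofReal s) :=
      ⟨by rw [ENNReal.one_le_ofReal]; linarith⟩
    ∃ T : Lp ℂ (ENNReal.ofReal s) (volume : Measure ℂ) →L[ℂ]
        BoundedContinuousFunction
          (closure {l : ℂ | A⁻¹ < ‖l‖ ∧ ‖l‖ < A}) ℂ,
      IsCompactOperator T ∧
      ∀ f : Lp ℂ (ENNReal.ofReal s) (volume : Measure ℂ),
        ∀ lam : closure {l : ℂ | A⁻¹ < ‖l‖ ∧ ‖l‖ < A},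
          T f lam = ∫ ς : ℂ, g ς * (f : ℂ → ℂ) ς / (ς - (lam : ℂ)) := by
  haveI hfact : Fact (1 ≤ ENNReal.ofReal s) := ⟨by rw [ENNReal.one_le_ofReal]; linarith⟩
  have hs0 : (0:ℝ) < s := by linarith
  have hs1 : (1:ℝ) < s := by linarith
  have hA0 : (0:ℝ) < A := by linarith
  have hA'0 : (0:ℝ) < A' := by linarith
  have hA'1 : (1:ℝ) < A' := by linarith
  set p : ℝ≥0∞ := ENNReal.ofReal s with hpdef
  set q : ℝ≥0∞ := ENNReal.ofReal (s/(s-1)) with hqdef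
  set t : ℝ≥0∞ := ENNReal.ofReal (2*s/(s-2)) with htdef
  -- exponent identities
  have h1p : 1/p = ENNReal.ofReal s⁻¹ := by
    rw [hpdef, one_div, ← ENNReal.ofReal_inv_of_pos hs0]
  have h1q : 1/q = ENNReal.ofReal (s/(s-1))⁻¹ := by
    rw [hqdef, one_div, ← ENNReal.ofReal_inv_of_pos (by apply div_pos hs0; linarith)]
  have h1t : 1/t = ENNReal.ofReal (2*s/(s-2))⁻¹ := by
    rw [htdef, one_div, ← ENNReal.ofReal_inv_of_pos (by apply div_pos (by linarith) (by linarith))]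
  have hE1 : 1/q = 1/(2:ℝ≥0∞) + 1/t := by
    rw [h1q, h1t, show (2:ℝ≥0∞) = ENNReal.ofReal 2 by simp,
      one_div, ← ENNReal.ofReal_inv_of_pos two_pos,
      ← ENNReal.ofReal_add (by positivity) (by apply inv_nonneg.mpr; apply div_nonneg <;> linarith)]
    congr 1
    field_simp
    ring
  have hE2 : 1/(1:ℝ≥0∞) = 1/q + 1/p := by
    rw [h1q, h1p, ← ENNReal.ofReal_add (by apply inv_nonneg.mpr; apply div_nonneg <;> linarith) (by positivity)]
    rw [show (1:ℝ≥0∞)/1 = ENNReal.ofReal 1 by simp]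
    congr 1
    field_simp
    ring
  -- the modified g
  set g₀ : ℂ → ℂ := fun ς =>
    if ((A')⁻¹ < ‖ς‖ ∧ ‖ς‖ < A') then 0 else g ς with hg₀def
  have hgg₀ : g₀ =ᵐ[volume] g := by
    filter_upwards [hg0] with ς h
    by_cases hc : ((A')⁻¹ < ‖ς‖ ∧ ‖ς‖ < A')
    · simp [hg₀def, hc, h hc]
    · simp [hg₀def, hc]
  have hg₀ : MemLp g₀ 2 (volume : Measure ℂ) := hg.ae_eq hgg₀.symm
  -- the weight and the dominating function
  set w : ℂ → ℝ := fun ς => (1 + ‖ς‖)⁻¹ with hwdef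
  have hwcont : Continuous w := by
    apply Continuous.inv₀ (by continuity)
    intro x; positivity
  have hw : MemLp w t (volume : Measure ℂ) := by
    have hfin : (Module.finrank ℝ ℂ : ℝ) < 2*s/(s-2) := by
      rw [Complex.finrank_real_complex]
      rw [lt_div_iff₀ (by linarith)]
      push_cast
      linarith
    have h1 : Integrable (fun x : ℂ => (1 + ‖x‖) ^ (-(2*s/(s-2)))) volume :=
      integrable_one_add_norm hfin
    have ht0 : t ≠ 0 := by
      rw [htdef, Ne, ENNReal.ofReal_eq_zero, not_le]
      apply div_pos (by linarith) (by linarith)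
    have httop : t ≠ ⊤ := ENNReal.ofReal_ne_top
    have htr : t.toReal = 2*s/(s-2) := ENNReal.toReal_ofReal
      (by apply div_nonneg <;> linarith)
    rw [← memLp_norm_rpow_iff hwcont.aestronglyMeasurable ht0 httop,
      ENNReal.div_self ht0 httop, memLp_one_iff_integrable]
    apply h1.congr
    apply ae_of_all
    intro x
    have hx : (0:ℝ) < 1 + ‖x‖ := by positivity
    rw [htr]
    show (1 + ‖x‖) ^ (-(2*s/(s-2))) = ‖(1 + ‖x‖)⁻¹‖ ^ (2*s/(s-2))
    rw [Real.norm_eq_abs, abs_of_nonneg (by positivity), ← Real.rpow_neg_one,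
      ← Real.rpow_mul hx.le]
    ring_nf
  set h : ℂ → ℝ := (fun ς => ‖g₀ ς‖) • w with hhdef
  have hh : MemLp h q (volume : Measure ℂ) := hw.smul hg₀.norm (hpqr := ⟨by simpa only [one_div] using hE1.symm⟩)
  set Ch : ℝ := (eLpNorm h q (volume : Measure ℂ)).toReal with hChdef
  have hCh0 : 0 ≤ Ch := ENNReal.toReal_nonneg
  -- geometric separation constant
  set c : ℝ := (min (A⁻¹ - A'⁻¹) (1 - A/A'))/2 with hcdef
  have hc0 : 0 < c := by
    have h1 : (0:ℝ) < A⁻¹ - A'⁻¹ := by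
      have := inv_strictAnti₀ hA0 hAA'
      linarith
    have h2 : (0:ℝ) < 1 - A/A' := by
      have : A / A' < 1 := (div_lt_one hA'0).mpr hAA'
      linarith
    have := lt_min h1 h2
    positivity
  set Dbar : Set ℂ := closure {l : ℂ | A⁻¹ < ‖l‖ ∧ ‖l‖ < A} with hDdef
  have hDmem : ∀ l : ℂ, l ∈ Dbar → A⁻¹ ≤ ‖l‖ ∧ ‖l‖ ≤ A := by
    intro l hl
    have hsub : Dbar ⊆ (fun z : ℂ => ‖z‖) ⁻¹' (Set.Icc A⁻¹ A) := by
      apply closure_minimal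
      · intro x hx
        simp only [Set.mem_setOf_eq] at hx
        exact ⟨hx.1.le, hx.2.le⟩
      · exact isClosed_Icc.preimage continuous_norm
    exact hsub hl
  have hsep : ∀ l : ℂ, l ∈ Dbar → ∀ ς : ℂ,
      ¬((A')⁻¹ < ‖ς‖ ∧ ‖ς‖ < A') → c * (1 + ‖ς‖) ≤ ‖ς - l‖ := by
    intro l hl ς hς
    obtain ⟨hl1, hl2⟩ := hDmem l hl
    rw [not_and_or, not_lt, not_lt] at hς
    rcases hς with hς | hς
    · -- ‖ς‖ ≤ A'⁻¹
      have h3 : ‖l‖ - ‖ς‖ ≤ ‖ς - l‖ := by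
        have := norm_sub_norm_le l ς
        rwa [norm_sub_rev] at this
      have h4 : c ≤ (A⁻¹ - A'⁻¹)/2 := by
        rw [hcdef]
        have := min_le_left (A⁻¹ - A'⁻¹) (1 - A/A')
        linarith
      have h5 : (A')⁻¹ < 1 := inv_lt_one_of_one_lt₀ hA'1
      nlinarith [norm_nonneg ς]
    · -- A' ≤ ‖ς‖
      have h3 : ‖ς‖ - ‖l‖ ≤ ‖ς - l‖ := norm_sub_norm_le ς l
      have h4 : c ≤ (1 - A/A')/2 := by
        rw [hcdef]
        have := min_le_right (A⁻¹ - A'⁻¹) (1 - A/A')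
        linarith
      have h5 : A / A' * A' = A := div_mul_cancel₀ A (ne_of_gt hA'0)
      have h6 : (1:ℝ) ≤ ‖ς‖ := le_trans hA'1.le hς
      have h7 : A / A' * A' ≤ A / A' * ‖ς‖ :=
        mul_le_mul_of_nonneg_left hς (by positivity)
      nlinarith
  -- integrability and integral bound for the dominating product
  have hψ : ∀ f : Lp ℂ p (volume : Measure ℂ),
      Integrable (fun ς => h ς * ‖(f : ℂ → ℂ) ς‖) volume := by
    intro f
    rw [← memLp_one_iff_integrable]
    exact MemLp.smul ((Lp.memLp f).norm) hh (hpqr := ⟨by simpa only [one_div] using hE2.symm⟩)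
  have hψle : ∀ f : Lp ℂ p (volume : Measure ℂ),
      ∫ ς, h ς * ‖(f : ℂ → ℂ) ς‖ ≤ Ch * ‖f‖ := by
    intro f
    have h2 : ‖∫ ς, h ς * ‖(f : ℂ → ℂ) ς‖‖ ≤
        (eLpNorm (fun ς => h ς * ‖(f : ℂ → ℂ) ς‖) 1 volume).toReal := by
      rw [eLpNorm_one_eq_lintegral_enorm]
      simp_rw [← ofReal_norm]
      exact norm_integral_le_lintegral_norm _
    have h3 : eLpNorm (fun ς => h ς * ‖(f : ℂ → ℂ) ς‖) 1 volume ≤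
        eLpNorm h q volume * eLpNorm (⇑f) p volume := by
      have := eLpNorm_smul_le_mul_eLpNorm (μ := (volume : Measure ℂ))
        (f := fun ς => ‖(f : ℂ → ℂ) ς‖) (φ := h)
        ((Lp.aestronglyMeasurable f).norm) hh.1 (hpqr := ⟨by simpa only [one_div] using hE2.symm⟩)
      rw [eLpNorm_norm] at this
      exact this
    have h4 : (eLpNorm (fun ς => h ς * ‖(f : ℂ → ℂ) ς‖) 1 volume).toReal ≤
        (eLpNorm h q volume * eLpNorm (⇑f) p volume).toReal := by
      apply ENNReal.toReal_mono _ h3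
      exact ENNReal.mul_ne_top hh.2.ne (Lp.memLp f).2.ne
    rw [ENNReal.toReal_mul, ← hChdef, ← Lp.norm_def] at h4
    calc ∫ ς, h ς * ‖(f : ℂ → ℂ) ς‖ ≤ ‖∫ ς, h ς * ‖(f : ℂ → ℂ) ς‖‖ := le_abs_self _
      _ ≤ _ := le_trans h2 h4
  -- pointwise bounds
  have hh_apply : ∀ ς, h ς = ‖g₀ ς‖ * (1 + ‖ς‖)⁻¹ := fun ς => rfl
  have hptA : ∀ f : Lp ℂ p (volume : Measure ℂ), ∀ l ∈ Dbar, ∀ ς : ℂ,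
      ‖g₀ ς * (f : ℂ → ℂ) ς / (ς - l)‖ ≤ c⁻¹ * (h ς * ‖(f : ℂ → ℂ) ς‖) := by
    intro f l hl ς
    by_cases hz : g₀ ς = 0
    · simp [hz, hh_apply ς]
    · have hns : ¬(((A')⁻¹ < ‖ς‖ ∧ ‖ς‖ < A')) := by
        intro hcond; exact hz (by simp [hg₀def, hcond])
      have hcu := hsep l hl ς hns
      have hu : (1:ℝ) ≤ 1 + ‖ς‖ := by linarith [norm_nonneg ς]
      calc ‖g₀ ς * (f : ℂ → ℂ) ς / (ς - l)‖
          = ‖g₀ ς‖ * ‖(f : ℂ → ℂ) ς‖ / ‖ς - l‖ := by rw [norm_div, norm_mul]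
        _ ≤ c⁻¹ * (‖g₀ ς‖ * (1 + ‖ς‖)⁻¹ * ‖(f : ℂ → ℂ) ς‖) :=
            aux_div_le1 hc0 hu hcu (norm_nonneg _) (norm_nonneg _)
        _ = c⁻¹ * (h ς * ‖(f : ℂ → ℂ) ς‖) := by rw [hh_apply ς]
  have hptB : ∀ f : Lp ℂ p (volume : Measure ℂ), ∀ l₁ ∈ Dbar, ∀ l₂ ∈ Dbar, ∀ ς : ℂ,
      ‖g₀ ς * (f : ℂ → ℂ) ς / (ς - l₁) - g₀ ς * (f : ℂ → ℂ) ς / (ς - l₂)‖ ≤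
        (c⁻¹ * c⁻¹ * ‖l₁ - l₂‖) * (h ς * ‖(f : ℂ → ℂ) ς‖) := by
    intro f l₁ hl₁ l₂ hl₂ ς
    by_cases hz : g₀ ς = 0
    · simp [hz, hh_apply ς]
    · have hns : ¬(((A')⁻¹ < ‖ς‖ ∧ ‖ς‖ < A')) := by
        intro hcond; exact hz (by simp [hg₀def, hcond])
      have hcu₁ := hsep l₁ hl₁ ς hns
      have hcu₂ := hsep l₂ hl₂ ς hns
      have hu : (1:ℝ) ≤ 1 + ‖ς‖ := by linarith [norm_nonneg ς]
      have hd₁ : (0:ℝ) < ‖ς - l₁‖ := lt_of_lt_of_le (by positivity) hcu₁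
      have hd₂ : (0:ℝ) < ‖ς - l₂‖ := lt_of_lt_of_le (by positivity) hcu₂
      have hx₁ : ς - l₁ ≠ 0 := norm_pos_iff.mp hd₁
      have hx₂ : ς - l₂ ≠ 0 := norm_pos_iff.mp hd₂
      have hid : g₀ ς * (f : ℂ → ℂ) ς / (ς - l₁) - g₀ ς * (f : ℂ → ℂ) ς / (ς - l₂) =
          g₀ ς * (f : ℂ → ℂ) ς * (l₁ - l₂) / ((ς - l₁) * (ς - l₂)) := by
        field_simp
        ring
      rw [hid]
      calc ‖g₀ ς * (f : ℂ → ℂ) ς * (l₁ - l₂) / ((ς - l₁) * (ς - l₂))‖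
          = ‖g₀ ς‖ * ‖(f : ℂ → ℂ) ς‖ * ‖l₁ - l₂‖ / (‖ς - l₁‖ * ‖ς - l₂‖) := by
            rw [norm_div, norm_mul, norm_mul, norm_mul]
        _ ≤ c⁻¹ * c⁻¹ * ‖l₁ - l₂‖ * (‖g₀ ς‖ * (1 + ‖ς‖)⁻¹ * ‖(f : ℂ → ℂ) ς‖) :=
            aux_div_le2 hc0 hu hcu₁ hcu₂ (norm_nonneg _) (norm_nonneg _) (norm_nonneg _)
        _ = (c⁻¹ * c⁻¹ * ‖l₁ - l₂‖) * (h ς * ‖(f : ℂ → ℂ) ς‖) := by rw [hh_apply ς]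
  -- integrability of the integrand
  have hInt : ∀ f : Lp ℂ p (volume : Measure ℂ), ∀ l ∈ Dbar,
      Integrable (fun ς => g₀ ς * (f : ℂ → ℂ) ς / (ς - l)) volume := by
    intro f l hl
    have hasm : AEStronglyMeasurable (fun ς => g₀ ς * (f : ℂ → ℂ) ς / (ς - l)) volume := by
      simp only [div_eq_mul_inv]
      exact (hg₀.1.mul (Lp.aestronglyMeasurable f)).mul
        ((measurable_id.sub_const l).inv.aestronglyMeasurable)
    exact Integrable.mono' ((hψ f).const_mul c⁻¹) hasm (ae_of_all _ (hptA f l hl))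
  -- bounds on the integrals
  have hB1 : ∀ f : Lp ℂ p (volume : Measure ℂ), ∀ l ∈ Dbar,
      ‖∫ ς, g₀ ς * (f : ℂ → ℂ) ς / (ς - l)‖ ≤ c⁻¹ * (Ch * ‖f‖) := by
    intro f l hl
    have h1 := norm_integral_le_of_norm_le ((hψ f).const_mul c⁻¹)
      (ae_of_all _ (hptA f l hl))
    rw [integral_const_mul] at h1
    refine le_trans h1 ?_
    exact mul_le_mul_of_nonneg_left (hψle f) (by positivity)
  have hB2 : ∀ f : Lp ℂ p (volume : Measure ℂ), ∀ l₁ ∈ Dbar, ∀ l₂ ∈ Dbar,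
      ‖(∫ ς, g₀ ς * (f : ℂ → ℂ) ς / (ς - l₁)) - ∫ ς, g₀ ς * (f : ℂ → ℂ) ς / (ς - l₂)‖ ≤
        (c⁻¹ * c⁻¹ * (Ch * ‖f‖)) * ‖l₁ - l₂‖ := by
    intro f l₁ hl₁ l₂ hl₂
    rw [← integral_sub (hInt f l₁ hl₁) (hInt f l₂ hl₂)]
    have h1 := norm_integral_le_of_norm_le ((hψ f).const_mul (c⁻¹ * c⁻¹ * ‖l₁ - l₂‖))
      (ae_of_all _ (hptB f l₁ hl₁ l₂ hl₂))
    rw [integral_const_mul] at h1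
    refine le_trans h1 ?_
    have := mul_le_mul_of_nonneg_left (hψle f) (by positivity : (0:ℝ) ≤ c⁻¹ * c⁻¹ * ‖l₁ - l₂‖)
    calc c⁻¹ * c⁻¹ * ‖l₁ - l₂‖ * ∫ ς, h ς * ‖(f : ℂ → ℂ) ς‖
        ≤ c⁻¹ * c⁻¹ * ‖l₁ - l₂‖ * (Ch * ‖f‖) := this
      _ = (c⁻¹ * c⁻¹ * (Ch * ‖f‖)) * ‖l₁ - l₂‖ := by ring
  -- continuity in the parameter
  have hGcont : ∀ f : Lp ℂ p (volume : Measure ℂ),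
      Continuous (fun l : Dbar => ∫ ς, g₀ ς * (f : ℂ → ℂ) ς / (ς - (l : ℂ))) := by
    intro f
    apply LipschitzWith.continuous (K := Real.toNNReal (c⁻¹ * c⁻¹ * (Ch * ‖f‖)))
    apply LipschitzWith.of_dist_le_mul
    intro l₁ l₂
    rw [dist_eq_norm, Subtype.dist_eq, dist_eq_norm,
      Real.coe_toNNReal _ (by positivity)]
    exact hB2 f l₁ l₁.2 l₂ l₂.2
  -- the bounded continuous function
  set Tb : Lp ℂ p (volume : Measure ℂ) → BoundedContinuousFunction Dbar ℂ := fun f =>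
    BoundedContinuousFunction.ofNormedAddCommGroup _ (hGcont f) (c⁻¹ * (Ch * ‖f‖))
      (fun l => hB1 f l l.2) with hTbdef
  have hTb_apply : ∀ f : Lp ℂ p (volume : Measure ℂ), ∀ l : Dbar,
      Tb f l = ∫ ς, g₀ ς * (f : ℂ → ℂ) ς / (ς - (l : ℂ)) := fun f l => rfl
  have hTb_norm : ∀ f : Lp ℂ p (volume : Measure ℂ), ‖Tb f‖ ≤ (c⁻¹ * Ch) * ‖f‖ := by
    intro f
    refine le_trans (BoundedContinuousFunction.norm_ofNormedAddCommGroup_le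
      (hGcont f) (by positivity) (fun l => hB1 f l l.2)) ?_
    rw [mul_assoc]
  -- linearity
  set Tlin : Lp ℂ p (volume : Measure ℂ) →ₗ[ℂ] BoundedContinuousFunction Dbar ℂ :=
    { toFun := Tb
      map_add' := by
        intro f₁ f₂
        ext l
        simp only [BoundedContinuousFunction.coe_add, Pi.add_apply]
        rw [hTb_apply, hTb_apply, hTb_apply, ← integral_add (hInt f₁ l l.2) (hInt f₂ l l.2)]
        apply integral_congr_ae
        filter_upwards [Lp.coeFn_add f₁ f₂] with ς hς
        rw [hς]
        simp only [Pi.add_apply]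
        ring
      map_smul' := by
        intro a f
        ext l
        simp only [RingHom.id_apply, BoundedContinuousFunction.coe_smul, Pi.smul_apply,
          smul_eq_mul]
        rw [hTb_apply, hTb_apply, ← smul_eq_mul, ← integral_smul]
        apply integral_congr_ae
        filter_upwards [Lp.coeFn_smul a f] with ς hς
        rw [hς]
        simp only [Pi.smul_apply, smul_eq_mul]
        ring } with hTlindef
  set T : Lp ℂ p (volume : Measure ℂ) →L[ℂ] BoundedContinuousFunction Dbar ℂ :=
    Tlin.mkContinuous ((c⁻¹ * Ch)) hTb_norm with hTdef
  have hT_apply : ∀ f : Lp ℂ p (volume : Measure ℂ), ∀ l : Dbar,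
      T f l = ∫ ς, g₀ ς * (f : ℂ → ℂ) ς / (ς - (l : ℂ)) := fun f l => rfl
  have hT_lip : ∀ f : Lp ℂ p (volume : Measure ℂ), ∀ l₁ l₂ : Dbar,
      dist (T f l₁) (T f l₂) ≤ (c⁻¹ * c⁻¹ * (Ch * ‖f‖)) * dist l₁ l₂ := by
    intro f l₁ l₂
    rw [dist_eq_norm, hT_apply, hT_apply, Subtype.dist_eq, dist_eq_norm]
    exact hB2 f l₁ l₁.2 l₂ l₂.2
  -- compactness of Dbar
  have hDcpt : IsCompact Dbar := by
    apply IsCompact.of_isClosed_subset (isCompact_closedBall (0:ℂ) A) isClosed_closure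
    apply closure_minimal
    · intro x hx
      simp only [Set.mem_setOf_eq] at hx
      rw [Metric.mem_closedBall, dist_zero_right]
      exact hx.2.le
    · exact Metric.isClosed_closedBall
  haveI : CompactSpace Dbar := isCompact_iff_compactSpace.mp hDcpt
  refine ⟨T, ?_, ?_⟩
  · -- compactness of the operator
    rw [show (⇑T : Lp ℂ p (volume : Measure ℂ) → BoundedContinuousFunction Dbar ℂ) =
      ⇑(T : Lp ℂ p (volume : Measure ℂ) →ₗ[ℂ] BoundedContinuousFunction Dbar ℂ) from rfl]
    rw [isCompactOperator_iff_isCompact_closure_image_closedBall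
      (T : Lp ℂ p (volume : Measure ℂ) →ₗ[ℂ] BoundedContinuousFunction Dbar ℂ) one_pos]
    apply BoundedContinuousFunction.arzela_ascoli
      (Metric.closedBall (0:ℂ) (c⁻¹ * Ch)) (isCompact_closedBall _ _)
    · rintro bcf x ⟨f, hf, rfl⟩
      rw [Metric.mem_closedBall] at hf ⊢
      rw [dist_zero_right]
      have h1 : ‖f‖ ≤ 1 := by rwa [← dist_zero_right]
      refine le_trans (hB1 f x x.2) ?_
      have : Ch * ‖f‖ ≤ Ch * 1 := mul_le_mul_of_nonneg_left h1 hCh0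
      have h2 : c⁻¹ * (Ch * ‖f‖) ≤ c⁻¹ * (Ch * 1) :=
        mul_le_mul_of_nonneg_left this (by positivity)
      simpa using h2
    · apply Metric.equicontinuous_of_continuity_modulus (fun r => (c⁻¹ * c⁻¹ * Ch) * r)
      · have : Filter.Tendsto (fun r : ℝ => (c⁻¹ * c⁻¹ * Ch) * r) (nhds 0) (nhds ((c⁻¹ * c⁻¹ * Ch) * 0)) :=
          (continuous_const.mul continuous_id).tendsto 0
        simpa using this
      · rintro x y ⟨bcf, ⟨f, hf, rfl⟩⟩
        rw [Metric.mem_closedBall, dist_zero_right] at hf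
        refine le_trans (hT_lip f x y) ?_
        have h1 : Ch * ‖f‖ ≤ Ch * 1 := mul_le_mul_of_nonneg_left hf hCh0
        have h2 : c⁻¹ * c⁻¹ * (Ch * ‖f‖) ≤ c⁻¹ * c⁻¹ * Ch := by
          calc c⁻¹ * c⁻¹ * (Ch * ‖f‖) ≤ c⁻¹ * c⁻¹ * (Ch * 1) :=
                mul_le_mul_of_nonneg_left h1 (by positivity)
            _ = c⁻¹ * c⁻¹ * Ch := by ring
        exact mul_le_mul_of_nonneg_right h2 dist_nonneg |>.trans
          (le_of_eq rfl) |> fun hh => hh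
  · -- the formula
    intro f lam
    rw [hT_apply]
    apply integral_congr_ae
    filter_upwards [hgg₀] with ς hς
    rw [hς]
end
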